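/- arXiv:2402.12640 — 3 statements merged into one kernel-verified Lean document; each statement's English description precedes it below -/
import Mathlib

section
/- Let n ≥ 3 and identify ℝⁿ with ℝ × ℝ^(n−1), writing vectors as (z₀, z′) with z₀ ∈ ℝ and z′ ∈ ℝ^(n−1). Let ξ ∈ ℝ and η ∈ ℝ^(n−1) with (ξ, η) ≠ (0, 0), and let ε > 0. Let f be a real symmetric n × n matrix. Suppose that for every unit vector Y ∈ ℝ^(n−1) and every s ∈ ℝ with |s| < ε and s·ξ + ⟨Y, η⟩ = 0, one has P f Pᵀ = 0, where P = Idₙ − w vᵀ with w = (s, Y) ∈ ℝⁿ and v = (0, Y) ∈ ℝⁿ. Then f = 0. -/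
open scoped RealInnerProductSpace Matrix
open Matrix

private lemma cons_dot {n : ℕ} (x y : ℝ) (u v : Fin n → ℝ) :
    (Fin.cons x u : Fin (n+1) → ℝ) ⬝ᵥ Fin.cons y v = x*y + u ⬝ᵥ v := by
  simp [dotProduct, Fin.sum_univ_succ]

private lemma dot_inner {m : ℕ} (Y Z : EuclideanSpace ℝ (Fin m)) :
    (fun i => Y i) ⬝ᵥ (fun i => Z i) = ⟪Y, Z⟫ := by
  simp [dotProduct, PiLp.inner_apply, RCLike.inner_apply, mul_comm]

private lemma vmv_vecMul {n : ℕ} (a b x : Fin n → ℝ) :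
    x ᵥ* vecMulVec a b = (x ⬝ᵥ a) • b := by
  funext i
  simp only [vecMul, vecMulVec_apply, dotProduct, Pi.smul_apply, smul_eq_mul, Finset.sum_mul]
  exact Finset.sum_congr rfl fun j _ => by ring

private lemma orth_vanish {n : ℕ} (f : Matrix (Fin n) (Fin n) ℝ) (w v u u' : Fin n → ℝ)
    (hM : (1 - vecMulVec w v) * f * (1 - vecMulVec w v)ᵀ = 0)
    (hu : u ⬝ᵥ w = 0) (hu' : u' ⬝ᵥ w = 0) : u ⬝ᵥ f *ᵥ u' = 0 := by
  have h1 : (1 - vecMulVec w v)ᵀ *ᵥ u' = u' := by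
    rw [Matrix.mulVec_transpose, Matrix.vecMul_sub, Matrix.vecMul_one, vmv_vecMul, hu',
      zero_smul, sub_zero]
  have h2 : u ᵥ* (1 - vecMulVec w v) = u := by
    rw [Matrix.vecMul_sub, Matrix.vecMul_one, vmv_vecMul, hu, zero_smul, sub_zero]
  have e1 : ((1 - vecMulVec w v) * f * (1 - vecMulVec w v)ᵀ) *ᵥ u'
      = (1 - vecMulVec w v) *ᵥ (f *ᵥ u') := by
    rw [← Matrix.mulVec_mulVec, h1, ← Matrix.mulVec_mulVec]
  have h0 : u ⬝ᵥ (((1 - vecMulVec w v) * f * (1 - vecMulVec w v)ᵀ) *ᵥ u') = 0 := by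
    rw [hM]; simp
  rw [e1, Matrix.dotProduct_mulVec, h2] at h0
  exact h0

private lemma exists_unit_orth {m : ℕ} (hm : 2 ≤ m) (x : EuclideanSpace ℝ (Fin m)) :
    ∃ Y : EuclideanSpace ℝ (Fin m), ‖Y‖ = 1 ∧ ⟪Y, x⟫ = 0 := by
  have hne : (⟨0, by omega⟩ : Fin m) ≠ ⟨1, by omega⟩ := by simp [Fin.ext_iff]
  by_cases hx : x ⟨0, by omega⟩ = 0
  · refine ⟨EuclideanSpace.single ⟨0, by omega⟩ 1, ?_, ?_⟩
    · simp
    · rw [EuclideanSpace.inner_single_left]; simp [hx]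
  · set y : EuclideanSpace ℝ (Fin m) :=
      (x ⟨1, by omega⟩) • EuclideanSpace.single ⟨0, by omega⟩ 1
        - (x ⟨0, by omega⟩) • EuclideanSpace.single ⟨1, by omega⟩ 1 with hy
    have hyx : ⟪y, x⟫ = 0 := by
      rw [hy, inner_sub_left, real_inner_smul_left, real_inner_smul_left,
        EuclideanSpace.inner_single_left, EuclideanSpace.inner_single_left]
      simp; ring
    have hy0 : y ≠ 0 := by
      intro h0
      have : y ⟨1, by omega⟩ = 0 := by rw [h0]; rfl
      rw [hy] at this
      simp [EuclideanSpace.single_apply, hne, Ne.symm hne] at this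
      exact hx this
    refine ⟨‖y‖⁻¹ • y, ?_, ?_⟩
    · rw [norm_smul, norm_inv, norm_norm, inv_mul_cancel₀ (norm_ne_zero_iff.2 hy0)]
    · rw [real_inner_smul_left, hyx, mul_zero]


private lemma core {n : ℕ} (f : Matrix (Fin n) (Fin n) ℝ) (hsymm : f.IsSymm)
    (P Q : Fin n → ℝ) (hPQ : P ⬝ᵥ Q = 0) (hp : P ⬝ᵥ P ≠ 0) (hq : Q ⬝ᵥ Q ≠ 0)
    (c σ : ℝ) (hc : c ≠ 0) (hσ : σ ≠ 0)
    (K1 : ∀ u u' : Fin n → ℝ, u ⬝ᵥ P = 0 → u' ⬝ᵥ P = 0 → u ⬝ᵥ f *ᵥ u' = 0)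
    (K2 : ∀ u u' : Fin n → ℝ, u ⬝ᵥ (c • P + σ • Q) = 0 → u' ⬝ᵥ (c • P + σ • Q) = 0 →
      u ⬝ᵥ f *ᵥ u' = 0)
    (K3 : ∀ u u' : Fin n → ℝ, u ⬝ᵥ (c • P - σ • Q) = 0 → u' ⬝ᵥ (c • P - σ • Q) = 0 →
      u ⬝ᵥ f *ᵥ u' = 0) :
    f = 0 := by
  have hsym : ∀ u v : Fin n → ℝ, u ⬝ᵥ f *ᵥ v = v ⬝ᵥ f *ᵥ u := by
    intro u v
    rw [Matrix.dotProduct_mulVec, ← Matrix.mulVec_transpose, hsymm.eq, dotProduct_comm]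
  have hQP : Q ⬝ᵥ P = 0 := by rwa [dotProduct_comm]
  have hQQ : Q ⬝ᵥ f *ᵥ Q = 0 := K1 Q Q hQP hQP
  have hQr : ∀ r : Fin n → ℝ, r ⬝ᵥ P = 0 → Q ⬝ᵥ f *ᵥ r = 0 := fun r hr => K1 Q r hQP hr
  set p := P ⬝ᵥ P with hpdef
  set q := Q ⬝ᵥ Q with hqdef
  set up : Fin n → ℝ := (σ*q) • P - (c*p) • Q with hup
  set um : Fin n → ℝ := (σ*q) • P + (c*p) • Q with hum
  have horthp : up ⬝ᵥ (c • P + σ • Q) = 0 := by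
    rw [hup]
    simp only [sub_dotProduct, smul_dotProduct, dotProduct_add,
      dotProduct_smul, smul_eq_mul, ← hpdef, ← hqdef, hPQ, hQP]
    ring
  have horthm : um ⬝ᵥ (c • P - σ • Q) = 0 := by
    rw [hum]
    simp only [add_dotProduct, smul_dotProduct, dotProduct_sub,
      dotProduct_smul, smul_eq_mul, ← hpdef, ← hqdef, hPQ, hQP]
    ring
  have expandp : up ⬝ᵥ f *ᵥ up =
      (σ*q)^2 * (P ⬝ᵥ f *ᵥ P) - 2*(σ*q)*(c*p) * (P ⬝ᵥ f *ᵥ Q) + (c*p)^2 * (Q ⬝ᵥ f *ᵥ Q) := by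
    rw [hup]
    simp only [Matrix.mulVec_sub, Matrix.mulVec_smul, sub_dotProduct,
      smul_dotProduct, dotProduct_sub, dotProduct_smul, smul_eq_mul,
      hsym Q P]
    ring
  have expandm : um ⬝ᵥ f *ᵥ um =
      (σ*q)^2 * (P ⬝ᵥ f *ᵥ P) + 2*(σ*q)*(c*p) * (P ⬝ᵥ f *ᵥ Q) + (c*p)^2 * (Q ⬝ᵥ f *ᵥ Q) := by
    rw [hum]
    simp only [Matrix.mulVec_add, Matrix.mulVec_smul, add_dotProduct,
      smul_dotProduct, dotProduct_add, dotProduct_smul, smul_eq_mul,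
      hsym Q P]
    ring
  have ep := K2 up up horthp horthp
  have em := K3 um um horthm horthm
  rw [expandp, hQQ] at ep
  rw [expandm, hQQ] at em
  have hσq : σ * q ≠ 0 := mul_ne_zero hσ hq
  have hcp : c * p ≠ 0 := mul_ne_zero hc hp
  have hPP : P ⬝ᵥ f *ᵥ P = 0 := by
    have h1 : (σ*q)^2 * (P ⬝ᵥ f *ᵥ P) = 0 := by linarith
    have := mul_eq_zero.1 h1
    rcases this with h | h
    · exact absurd h (pow_ne_zero 2 hσq)
    · exact h
  have hPQf : P ⬝ᵥ f *ᵥ Q = 0 := by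
    have h1 : (2*(σ*q)*(c*p)) * (P ⬝ᵥ f *ᵥ Q) = 0 := by linarith
    rcases mul_eq_zero.1 h1 with h | h
    · exact absurd h (by
        have : (2:ℝ) ≠ 0 := two_ne_zero
        exact mul_ne_zero (mul_ne_zero this hσq) hcp)
    · exact h
  have hPr : ∀ r : Fin n → ℝ, r ⬝ᵥ P = 0 → r ⬝ᵥ Q = 0 → P ⬝ᵥ f *ᵥ r = 0 := by
    intro r hrP hrQ
    have hrw : r ⬝ᵥ (c • P + σ • Q) = 0 := by
      simp only [dotProduct_add, dotProduct_smul, smul_eq_mul, hrP, hrQ]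
      ring
    have e := K2 up r horthp hrw
    rw [hup] at e
    simp only [sub_dotProduct, smul_dotProduct, smul_eq_mul] at e
    rw [hQr r hrP] at e
    have h1 : (σ*q) * (P ⬝ᵥ f *ᵥ r) = 0 := by linarith
    rcases mul_eq_zero.1 h1 with h | h
    · exact absurd h hσq
    · exact h
  have key : ∀ u u' : Fin n → ℝ, u ⬝ᵥ f *ᵥ u' = 0 := by
    intro u u'
    set a := (u ⬝ᵥ P)/p with ha
    set b := (u ⬝ᵥ Q)/q with hb
    set a' := (u' ⬝ᵥ P)/p with ha'
    set b' := (u' ⬝ᵥ Q)/q with hb'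
    set r : Fin n → ℝ := u - a • P - b • Q with hr
    set r' : Fin n → ℝ := u' - a' • P - b' • Q with hr'
    have hrP : r ⬝ᵥ P = 0 := by
      rw [hr]
      simp only [sub_dotProduct, smul_dotProduct, smul_eq_mul, ← hpdef, hQP,
        ha, hb]
      field_simp
      ring
    have hrQ : r ⬝ᵥ Q = 0 := by
      rw [hr]
      simp only [sub_dotProduct, smul_dotProduct, smul_eq_mul, ← hqdef, hPQ,
        ha, hb]
      field_simp
      ring
    have hrP' : r' ⬝ᵥ P = 0 := by
      rw [hr']
      simp only [sub_dotProduct, smul_dotProduct, smul_eq_mul, ← hpdef, hQP,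
        ha', hb']
      field_simp
      ring
    have hrQ' : r' ⬝ᵥ Q = 0 := by
      rw [hr']
      simp only [sub_dotProduct, smul_dotProduct, smul_eq_mul, ← hqdef, hPQ,
        ha', hb']
      field_simp
      ring
    have hu : u = a • P + b • Q + r := by rw [hr]; abel
    have hu' : u' = a' • P + b' • Q + r' := by rw [hr']; abel
    have t1 : P ⬝ᵥ f *ᵥ P = 0 := hPP
    have t2 : P ⬝ᵥ f *ᵥ Q = 0 := hPQf
    have t3 : Q ⬝ᵥ f *ᵥ P = 0 := by rw [hsym]; exact hPQf
    have t4 : Q ⬝ᵥ f *ᵥ Q = 0 := hQQ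
    have t5 : P ⬝ᵥ f *ᵥ r' = 0 := hPr r' hrP' hrQ'
    have t6 : Q ⬝ᵥ f *ᵥ r' = 0 := hQr r' hrP'
    have t7 : r ⬝ᵥ f *ᵥ P = 0 := by rw [hsym]; exact hPr r hrP hrQ
    have t8 : r ⬝ᵥ f *ᵥ Q = 0 := by rw [hsym]; exact hQr r hrP
    have t9 : r ⬝ᵥ f *ᵥ r' = 0 := K1 r r' hrP hrP'
    rw [hu, hu']
    simp only [Matrix.mulVec_add, Matrix.mulVec_smul, add_dotProduct,
      smul_dotProduct, dotProduct_add, dotProduct_smul, smul_eq_mul,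
      t1, t2, t3, t4, t5, t6, t7, t8, t9]
    ring
  ext i j
  simpa using key (Pi.single i 1) (Pi.single j 1)

set_option maxHeartbeats 1000000 in
/-- **Ellipticity at fiber infinity for the transverse ray transform of 2-tensors
(kernel statement).**  With `n = m + 1 ≥ 3`, identify `ℝⁿ = ℝ × ℝ^m`.  If a real symmetric
`n × n` matrix `f` satisfies `P f Pᵀ = 0` for `P = Id − w vᵀ`, `w = (s, Y)`, `v = (0, Y)`,
for every unit vector `Y ∈ ℝ^m` and every small `s` with `s ξ + ⟨Y, η⟩ = 0`, then `f = 0`. -/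

theorem transverse_fiber_infinity_kernel
    (m : ℕ) (hm : 2 ≤ m) (ξ : ℝ) (η : EuclideanSpace ℝ (Fin m))
    (hξη : ¬ (ξ = 0 ∧ η = 0)) (ε : ℝ) (hε : 0 < ε)
    (f : Matrix (Fin (m + 1)) (Fin (m + 1)) ℝ) (hsymm : f.IsSymm)
    (h : ∀ Y : EuclideanSpace ℝ (Fin m), ‖Y‖ = 1 → ∀ s : ℝ, |s| < ε →
      s * ξ + ⟪Y, η⟫ = 0 →
      (1 - Matrix.vecMulVec (Fin.cons s (fun i => Y i)) (Fin.cons 0 (fun i => Y i))) * f *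
        (1 - Matrix.vecMulVec (Fin.cons s (fun i => Y i)) (Fin.cons 0 (fun i => Y i)))ᵀ = 0) :
    f = 0 := by
  have hK : ∀ Y : EuclideanSpace ℝ (Fin m), ‖Y‖ = 1 → ∀ s : ℝ, |s| < ε →
      s * ξ + ⟪Y, η⟫ = 0 → ∀ u u' : Fin (m+1) → ℝ,
      u ⬝ᵥ (Fin.cons s (fun i => Y i)) = 0 → u' ⬝ᵥ (Fin.cons s (fun i => Y i)) = 0 →
      u ⬝ᵥ f *ᵥ u' = 0 := by
    intro Y hYn s hs hcon u u' hu hu'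
    exact orth_vanish f _ _ u u' (h Y hYn s hs hcon) hu hu'
  obtain ⟨Y₀, hY₀n, hY₀η⟩ := exists_unit_orth hm η
  have hY₀Y₀ : (fun i => Y₀ i) ⬝ᵥ (fun i => Y₀ i) = 1 := by
    rw [dot_inner, real_inner_self_eq_norm_sq, hY₀n, one_pow]
  by_cases hξ : ξ = 0
  · -- ξ = 0 : use P = (0, Y₀), Q = e₀, w = P, P ± (ε/2) Q
    set P : Fin (m+1) → ℝ := Fin.cons 0 (fun i => Y₀ i) with hP
    set Q : Fin (m+1) → ℝ := Fin.cons 1 (fun _ => 0) with hQ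
    have hw2 : (1:ℝ) • P + (ε/2) • Q = Fin.cons (ε/2) (fun i => Y₀ i) := by
      funext i
      refine Fin.cases ?_ (fun j => ?_) i <;>
        simp [hP, hQ]
    have hw3 : (1:ℝ) • P - (ε/2) • Q = Fin.cons (-(ε/2)) (fun i => Y₀ i) := by
      funext i
      refine Fin.cases ?_ (fun j => ?_) i <;>
        simp [hP, hQ]
    refine core f hsymm P Q ?_ ?_ ?_ 1 (ε/2) one_ne_zero (by positivity) ?_ ?_ ?_
    · rw [hP, hQ, cons_dot]; simp [dotProduct]
    · rw [hP, cons_dot, hY₀Y₀]; norm_num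
    · rw [hQ, cons_dot]; simp [dotProduct]
    · exact hK Y₀ hY₀n 0 (by simpa using hε) (by simp [hξ, hY₀η])
    · intro u u' hu hu'
      rw [hw2] at hu hu'
      exact hK Y₀ hY₀n (ε/2) (by rw [abs_of_pos (by positivity)]; linarith)
        (by simp [hξ, hY₀η]) u u' hu hu'
    · intro u u' hu hu'
      rw [hw3] at hu hu'
      exact hK Y₀ hY₀n (-(ε/2)) (by rw [abs_neg, abs_of_pos (by positivity)]; linarith)
        (by simp [hξ, hY₀η]) u u' hu hu'
  · -- ξ ≠ 0
    obtain ⟨Y₁, hY₁n, hY₁Y₀⟩ := exists_unit_orth hm Y₀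
    have hY₁Y₁ : (fun i => Y₁ i) ⬝ᵥ (fun i => Y₁ i) = 1 := by
      rw [dot_inner, real_inner_self_eq_norm_sq, hY₁n, one_pow]
    have hY₀Y₁ : ⟪Y₀, Y₁⟫ = 0 := by rw [real_inner_comm]; exact hY₁Y₀
    set k : ℝ := ⟪Y₁, η⟫ with hk
    have hξ0 : (0:ℝ) < |ξ| := abs_pos.2 hξ
    set σ : ℝ := min (1/2) (ε*|ξ|/(2*(|k|+1))) with hσdef
    have hσ0 : 0 < σ := lt_min (by norm_num) (by positivity)
    have hσle : σ ≤ 1/2 := min_le_left _ _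
    have h1σ : 0 < 1 - σ^2 := by nlinarith
    set c : ℝ := Real.sqrt (1 - σ^2) with hcdef
    have hc0 : 0 < c := Real.sqrt_pos.2 h1σ
    have hc2 : c^2 = 1 - σ^2 := Real.sq_sqrt h1σ.le
    have hsb : σ * |k| < ε * |ξ| := by
      have h2 : σ ≤ ε*|ξ|/(2*(|k|+1)) := min_le_right _ _
      have h2' : σ * (2*(|k|+1)) ≤ ε*|ξ| := by
        rw [← le_div_iff₀ (by positivity)]; exact h2
      nlinarith [abs_nonneg k, hσ0]
    set P : Fin (m+1) → ℝ := Fin.cons 0 (fun i => Y₀ i) with hP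
    set Q : Fin (m+1) → ℝ := Fin.cons (-(k/ξ)) (fun i => Y₁ i) with hQ
    -- the two tilted admissible vectors
    set Y₂ : EuclideanSpace ℝ (Fin m) := c • Y₀ + σ • Y₁ with hY₂
    set Y₃ : EuclideanSpace ℝ (Fin m) := c • Y₀ - σ • Y₁ with hY₃
    have hY₂n : ‖Y₂‖ = 1 := by
      have hin : ⟪Y₂, Y₂⟫ = 1 := by
        simp only [hY₂, inner_add_left, inner_add_right, real_inner_smul_left,
          real_inner_smul_right]
        simp only [real_inner_self_eq_norm_sq, hY₀n, hY₁n, hY₀Y₁, hY₁Y₀]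
        nlinarith
      rw [real_inner_self_eq_norm_sq] at hin
      rw [← Real.sqrt_sq (norm_nonneg Y₂), hin, Real.sqrt_one]
    have hY₃n : ‖Y₃‖ = 1 := by
      have hin : ⟪Y₃, Y₃⟫ = 1 := by
        simp only [hY₃, inner_sub_left, inner_sub_right, real_inner_smul_left,
          real_inner_smul_right]
        simp only [real_inner_self_eq_norm_sq, hY₀n, hY₁n, hY₀Y₁, hY₁Y₀]
        nlinarith
      rw [real_inner_self_eq_norm_sq] at hin
      rw [← Real.sqrt_sq (norm_nonneg Y₃), hin, Real.sqrt_one]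
    have hY₂η : ⟪Y₂, η⟫ = σ * k := by
      rw [hY₂, inner_add_left, real_inner_smul_left, real_inner_smul_left, hY₀η, ← hk]
      ring
    have hY₃η : ⟪Y₃, η⟫ = -(σ * k) := by
      rw [hY₃, inner_sub_left, real_inner_smul_left, real_inner_smul_left, hY₀η, ← hk]
      ring
    have habs : |(-(σ*k))/ξ| < ε := by
      rw [abs_div, abs_neg, abs_mul, abs_of_pos hσ0, div_lt_iff₀ hξ0]
      exact hsb
    have hw2 : c • P + σ • Q = Fin.cons ((-(σ*k))/ξ) (fun i => Y₂ i) := by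
      funext i
      refine Fin.cases ?_ (fun j => ?_) i
      · simp only [Pi.add_apply, Pi.smul_apply, hP, hQ, Fin.cons_zero, smul_eq_mul]
        field_simp
        ring
      · simp [hP, hQ, hY₂]
    have hw3 : c • P - σ • Q = Fin.cons ((σ*k)/ξ) (fun i => Y₃ i) := by
      funext i
      refine Fin.cases ?_ (fun j => ?_) i
      · simp only [Pi.sub_apply, Pi.smul_apply, hP, hQ, Fin.cons_zero, smul_eq_mul]
        field_simp
        ring
      · simp [hP, hQ, hY₃]
    refine core f hsymm P Q ?_ ?_ ?_ c σ (ne_of_gt hc0) (ne_of_gt hσ0) ?_ ?_ ?_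
    · rw [hP, hQ, cons_dot, dot_inner, hY₀Y₁]; ring
    · rw [hP, cons_dot, hY₀Y₀]; norm_num
    · rw [hQ, cons_dot, hY₁Y₁]
      have : (0:ℝ) < -(k/ξ) * -(k/ξ) + 1 := by nlinarith [sq_nonneg (k/ξ)]
      exact ne_of_gt this
    · exact hK Y₀ hY₀n 0 (by simpa using hε) (by simp [hY₀η])
    · intro u u' hu hu'
      rw [hw2] at hu hu'
      refine hK Y₂ hY₂n ((-(σ*k))/ξ) habs ?_ u u' hu hu'
      rw [hY₂η, div_mul_cancel₀ _ hξ]; ring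
    · intro u u' hu hu'
      rw [hw3] at hu hu'
      refine hK Y₃ hY₃n ((σ*k)/ξ) (by rwa [abs_div, abs_mul, abs_of_pos hσ0,
        div_lt_iff₀ hξ0] ) ?_ u u' hu hu'
      rw [hY₃η, div_mul_cancel₀ _ hξ]; ring
end

section
/- Let n ≥ 3 and identify ℂⁿ with ℂ × ℂ^(n−1), writing vectors as (z₀, z′). Let ξ ∈ ℝ and η ∈ ℝ^(n−1), and let i denote the imaginary unit. Let f be a complex symmetric n × n matrix (fᵀ = f). Suppose that for every unit vector Y ∈ ℝ^(n−1), setting c = (ξ − i)·⟨Y, η⟩/(ξ² + 1) ∈ ℂ, w = (−c, Y) ∈ ℂⁿ, v = (0, Y) ∈ ℂⁿ, and P = Idₙ − w vᵀ, one has P f Pᵀ = 0. Then f = 0. -/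
open scoped RealInnerProductSpace Matrix

private lemma aux_kernel {n : Type*} [Fintype n] [DecidableEq n]
    (f : Matrix n n ℂ) (w v u u' : n → ℂ)
    (hP : (1 - Matrix.vecMulVec w v) * f * (1 - Matrix.vecMulVec w v)ᵀ = 0)
    (hu : w ⬝ᵥ u = 0) (hu' : w ⬝ᵥ u' = 0) : u ⬝ᵥ f *ᵥ u' = 0 := by
  have hT : (1 - Matrix.vecMulVec w v)ᵀ *ᵥ u' = u' := by
    ext i
    simp only [Matrix.sub_mulVec, Matrix.mulVec, Matrix.transpose_apply,
      Matrix.one_apply, Matrix.sub_apply, Matrix.vecMulVec_apply, dotProduct,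
      Pi.sub_apply]
    have : ∑ j, w j * v i * u' j = v i * (w ⬝ᵥ u') := by
      simp only [dotProduct, Finset.mul_sum]
      exact Finset.sum_congr rfl (fun j _ => by ring)
    rw [show (fun x => ((if x = i then 1 else 0) - w x * v i) * u' x)
        = fun x => (if x = i then u' x else 0) - w x * v i * u' x by
      funext x; split <;> ring]
    rw [Finset.sum_sub_distrib]
    simp [this, hu']
  have hL : u ᵥ* (1 - Matrix.vecMulVec w v) = u := by
    ext i
    simp only [Matrix.vecMul, dotProduct, Matrix.sub_apply, Matrix.one_apply,
      Matrix.vecMulVec_apply]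
    have : ∑ j, u j * (w j * v i) = (w ⬝ᵥ u) * v i := by
      simp only [dotProduct, Finset.sum_mul]
      exact Finset.sum_congr rfl (fun j _ => by ring)
    rw [show (fun j => u j * ((if j = i then 1 else 0) - w j * v i))
        = fun j => (if j = i then u j else 0) - u j * (w j * v i) by
      funext j; split <;> ring]
    rw [Finset.sum_sub_distrib]
    simp [this, hu]
  calc u ⬝ᵥ f *ᵥ u'
      = (u ᵥ* (1 - Matrix.vecMulVec w v)) ⬝ᵥ (f *ᵥ u') := by rw [hL]
    _ = u ⬝ᵥ ((1 - Matrix.vecMulVec w v) *ᵥ (f *ᵥ u')) :=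
        (Matrix.dotProduct_mulVec _ _ _).symm
    _ = 0 := by
        conv_lhs => rw [← hT]
        rw [Matrix.mulVec_mulVec, Matrix.mulVec_mulVec, hP]
        simp

/-- **Ellipticity at base infinity for the transverse ray transform of 2-tensors
(kernel statement).**  With `n = m + 1 ≥ 3`, identify `ℂⁿ = ℂ × ℂ^m`.  If a complex symmetric
`n × n` matrix `f` satisfies `P f Pᵀ = 0` for `P = Id − w vᵀ`, `w = (−c, Y)`, `v = (0, Y)`,
`c = (ξ − i)⟨Y, η⟩/(ξ² + 1)`, for every unit vector `Y ∈ ℝ^m`, then `f = 0`. -/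
theorem transverse_base_infinity_kernel
    (m : ℕ) (hm : 2 ≤ m) (ξ : ℝ) (η : EuclideanSpace ℝ (Fin m))
    (f : Matrix (Fin (m + 1)) (Fin (m + 1)) ℂ) (hsymm : f.IsSymm)
    (h : ∀ Y : EuclideanSpace ℝ (Fin m), ‖Y‖ = 1 →
      let c : ℂ := ((ξ : ℂ) - Complex.I) * ((⟪Y, η⟫ : ℝ) : ℂ) / (((ξ ^ 2 + 1 : ℝ) : ℂ))
      let w : Fin (m + 1) → ℂ := Fin.cons (-c) (fun i => ((Y i : ℝ) : ℂ))
      let v : Fin (m + 1) → ℂ := Fin.cons 0 (fun i => ((Y i : ℝ) : ℂ))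
      let P : Matrix (Fin (m + 1)) (Fin (m + 1)) ℂ := 1 - Matrix.vecMulVec w v
      P * f * Pᵀ = 0) :
    f = 0 := by
  haveI : Nontrivial (Fin m) := by
    refine Fin.nontrivial_iff_two_le.mpr hm
  -- notation for c and w as functions of Y
  set cc : EuclideanSpace ℝ (Fin m) → ℂ := fun Y =>
    ((ξ : ℂ) - Complex.I) * ((⟪Y, η⟫ : ℝ) : ℂ) / (((ξ ^ 2 + 1 : ℝ) : ℂ)) with hcc
  set ww : EuclideanSpace ℝ (Fin m) → (Fin (m + 1) → ℂ) := fun Y =>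
    Fin.cons (-(cc Y)) (fun i => ((Y i : ℝ) : ℂ)) with hww
  have key : ∀ Y : EuclideanSpace ℝ (Fin m), ‖Y‖ = 1 →
      ∀ u u' : Fin (m + 1) → ℂ, ww Y ⬝ᵥ u = 0 → ww Y ⬝ᵥ u' = 0 →
      u ⬝ᵥ f *ᵥ u' = 0 := by
    intro Y hY u u' hu hu'
    exact aux_kernel f (ww Y) (Fin.cons 0 (fun i => ((Y i : ℝ) : ℂ))) u u' (h Y hY) hu hu'
  have wws : ∀ (Y : EuclideanSpace ℝ (Fin m)) (j : Fin m), ww Y j.succ = ((Y j : ℝ) : ℂ) := by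
    intro Y j; simp [hww]
  have ww0 : ∀ Y, ww Y 0 = -(cc Y) := by intro Y; simp [hww]
  have dotS : ∀ (Y : EuclideanSpace ℝ (Fin m)) (j : Fin (m+1)),
      ww Y ⬝ᵥ (Pi.single j 1 : Fin (m+1) → ℂ) = ww Y j := by
    intro Y j; simp [dotProduct_single]
  -- Step 1: diagonal spatial entries vanish
  have hdiag : ∀ l : Fin m, f l.succ l.succ = 0 := by
    intro l
    obtain ⟨k, hk⟩ := exists_ne l
    have hY : ‖(EuclideanSpace.single k (1:ℝ) : EuclideanSpace ℝ (Fin m))‖ = 1 := by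
      simp [EuclideanSpace.norm_single]
    have hw : ww (EuclideanSpace.single k 1) ⬝ᵥ (Pi.single l.succ 1 : Fin (m+1) → ℂ) = 0 := by
      rw [dotS, wws]
      simp [EuclideanSpace.single_apply, Ne.symm hk]
    have h0 := key _ hY _ _ hw hw
    rw [Matrix.mulVec_single_one, single_dotProduct] at h0
    simpa using h0
  -- Step 2: all spatial entries vanish
  have hall : ∀ k l : Fin m, f k.succ l.succ = 0 := by
    intro k l
    rcases eq_or_ne k l with rfl | hkl
    · exact hdiag k
    · set Y : EuclideanSpace ℝ (Fin m) :=
        WithLp.toLp 2 (fun i => if i = k ∨ i = l then (Real.sqrt 2)⁻¹ else 0) with hYdef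
      have hYk : Y k = (Real.sqrt 2)⁻¹ := by simp [hYdef]
      have hYl : Y l = (Real.sqrt 2)⁻¹ := by simp [hYdef]
      have hY : ‖Y‖ = 1 := by
        rw [EuclideanSpace.norm_eq]
        have hterm : ∀ i, ‖Y i‖ ^ 2 = if i ∈ ({k, l} : Finset (Fin m)) then (2:ℝ)⁻¹ else 0 := by
          intro i
          by_cases hi : i = k ∨ i = l
          · have : Y i = (Real.sqrt 2)⁻¹ := by simp [hYdef, hi]
            rw [this, if_pos (by simpa using hi)]
            rw [Real.norm_eq_abs, sq_abs, inv_pow, Real.sq_sqrt (by norm_num : (2:ℝ) ≥ 0)]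
          · have : Y i = 0 := by simp [hYdef, hi]
            rw [this, if_neg (by simpa using hi)]
            simp
        have hsum : ∑ i, ‖Y i‖ ^ 2 = 1 := by
          rw [Finset.sum_congr rfl (fun i _ => hterm i), Finset.sum_ite_mem,
            Finset.univ_inter, Finset.sum_const,
            Finset.card_insert_of_notMem (by simpa using hkl), Finset.card_singleton]
          norm_num
        rw [hsum, Real.sqrt_one]
      have hw : ww Y ⬝ᵥ ((Pi.single k.succ 1 : Fin (m+1) → ℂ) - Pi.single l.succ 1) = 0 := by
        rw [dotProduct_sub, dotS, dotS, wws, wws, hYk, hYl, sub_self]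
      have h0 := key _ hY _ _ hw hw
      rw [Matrix.mulVec_sub, Matrix.mulVec_single_one, Matrix.mulVec_single_one] at h0
      rw [sub_dotProduct, dotProduct_sub, dotProduct_sub,
        single_dotProduct, single_dotProduct, single_dotProduct,
        single_dotProduct] at h0
      simp only [Matrix.col_apply, one_mul, mul_one] at h0
      have e1 := hdiag k
      have e2 := hdiag l
      have e3 : f l.succ k.succ = f k.succ l.succ := hsymm.apply k.succ l.succ
      rw [e1, e2, e3] at h0
      linear_combination (-(1:ℂ)/2) * h0
  -- Step 3: first row spatial entries vanish
  have hrow : ∀ l : Fin m, f 0 l.succ = 0 := by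
    intro l
    obtain ⟨k, hk⟩ := exists_ne l
    set Y : EuclideanSpace ℝ (Fin m) := EuclideanSpace.single k (1:ℝ) with hYdef
    have hY : ‖Y‖ = 1 := by simp [hYdef, EuclideanSpace.norm_single]
    have hYk : Y k = 1 := by simp [hYdef, EuclideanSpace.single_apply]
    have hYl : Y l = 0 := by simp [hYdef, EuclideanSpace.single_apply, Ne.symm hk]
    have hwu : ww Y ⬝ᵥ ((Pi.single 0 1 : Fin (m+1) → ℂ) + cc Y • (Pi.single k.succ 1 : Fin (m+1) → ℂ)) = 0 := by
      rw [dotProduct_add, dotProduct_smul, dotS, dotS, ww0, wws, hYk]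
      simp
    have hwu' : ww Y ⬝ᵥ (Pi.single l.succ 1 : Fin (m+1) → ℂ) = 0 := by
      rw [dotS, wws, hYl]
      simp
    have h0 := key _ hY _ _ hwu hwu'
    rw [Matrix.mulVec_single_one, add_dotProduct, smul_dotProduct,
      single_dotProduct, single_dotProduct] at h0
    simp only [Matrix.col_apply, one_mul, mul_one, smul_eq_mul, hall, mul_zero, add_zero] at h0
    exact h0
  -- Step 4: the (0,0) entry vanishes
  have h00 : f 0 0 = 0 := by
    have k : Fin m := ⟨0, by omega⟩
    set Y : EuclideanSpace ℝ (Fin m) := EuclideanSpace.single k (1:ℝ) with hYdef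
    have hY : ‖Y‖ = 1 := by simp [hYdef, EuclideanSpace.norm_single]
    have hYk : Y k = 1 := by simp [hYdef, EuclideanSpace.single_apply]
    have hwu : ww Y ⬝ᵥ ((Pi.single 0 1 : Fin (m+1) → ℂ) + cc Y • (Pi.single k.succ 1 : Fin (m+1) → ℂ)) = 0 := by
      rw [dotProduct_add, dotProduct_smul, dotS, dotS, ww0, wws, hYk]
      simp
    have h0 := key _ hY _ _ hwu hwu
    rw [Matrix.mulVec_add, Matrix.mulVec_smul, Matrix.mulVec_single_one, Matrix.mulVec_single_one,
      dotProduct_add, dotProduct_smul,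
      add_dotProduct, add_dotProduct, smul_dotProduct,
      smul_dotProduct, single_dotProduct, single_dotProduct,
      single_dotProduct, single_dotProduct] at h0
    have ek0 : f k.succ 0 = f 0 k.succ := hsymm.apply 0 k.succ
    simp only [Matrix.col_apply, one_mul, mul_one, smul_eq_mul, hall, hrow, ek0, mul_zero, add_zero] at h0
    exact h0
  -- Conclusion
  ext i j
  simp only [Matrix.zero_apply]
  induction i using Fin.cases with
  | zero =>
    induction j using Fin.cases with
    | zero => exact h00
    | succ b => exact hrow b
  | succ a =>
    induction j using Fin.cases with
    | zero => rw [hsymm.apply 0 a.succ]; exact hrow a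
    | succ b => exact hall a b
end

section
/- Let n ≥ 3, let ξ ∈ ℝ with ξ ≠ 0 and η ∈ ℝ^(n−1), and let χ : ℝ → ℝ be continuous, even, nonnegative, compactly supported, with χ(0) > 0. For a unit vector Y ∈ ℝ^(n−1) set s(Y) = −⟨Y, η⟩/ξ, w(Y) = (s(Y), Y) ∈ ℝⁿ, v(Y) = (0, Y) ∈ ℝⁿ, and P(Y) = Idₙ − w(Y) v(Y)ᵀ. Then for every nonzero real symmetric n × n matrix f, ∫_{S^(n−2)} χ(s(Y)) ‖P(Y) f P(Y)ᵀ‖²_F dσ(Y) > 0, where σ is the surface measure on the unit sphere S^(n−2) ⊂ ℝ^(n−1) and ‖·‖_F is the Frobenius norm. -/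
open scoped RealInnerProductSpace Matrix
open MeasureTheory
open Finset Metric Set
open scoped Pointwise ENNReal

lemma quad_expand {n : ℕ} (f : Matrix (Fin n) (Fin n) ℝ) (w c : Fin n → ℝ)
    (h : ∀ i j, f i j = w i * c j + c i * w j) (x : Fin n → ℝ) :
    ∑ i, ∑ j, x i * f i j * x j
      = 2 * (∑ i, w i * x i) * (∑ i, c i * x i) := by
  have : ∑ i, ∑ j, x i * f i j * x j
      = ∑ i, ((x i * w i) * ∑ j, c j * x j + (x i * c i) * ∑ j, w j * x j) := by
    refine Finset.sum_congr rfl fun i _ => ?_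
    rw [Finset.mul_sum, Finset.mul_sum, ← Finset.sum_add_distrib]
    refine Finset.sum_congr rfl fun j _ => by rw [h i j]; ring
  rw [this, Finset.sum_add_distrib, ← Finset.sum_mul, ← Finset.sum_mul]
  rw [show (∑ i, x i * w i) = ∑ i, w i * x i from by simp [mul_comm],
      show (∑ i, x i * c i) = ∑ i, c i * x i from by simp [mul_comm],
      show (∑ j, c j * x j) = ∑ i, c i * x i from rfl,
      show (∑ j, w j * x j) = ∑ i, w i * x i from rfl]
  ring

lemma core_s4 {n : ℕ} (f : Matrix (Fin n) (Fin n) ℝ) (w₁ w₂ w₃ c₁ c₂ c₃ x₂ x₃ : Fin n → ℝ)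
    (h1 : ∀ i j, f i j = w₁ i * c₁ j + c₁ i * w₁ j)
    (h2 : ∀ i j, f i j = w₂ i * c₂ j + c₂ i * w₂ j)
    (h3 : ∀ i j, f i j = w₃ i * c₃ j + c₃ i * w₃ j)
    (hx₂ : ∑ i, w₂ i * x₂ i = 0) (h12 : ∑ i, w₁ i * x₂ i ≠ 0)
    (hx₃ : ∑ i, w₃ i * x₃ i = 0) (h13 : ∑ i, w₁ i * x₃ i ≠ 0)
    (h23 : ∑ i, w₂ i * x₃ i ≠ 0)
    (hw₂ : ∑ i, w₂ i * w₂ i ≠ 0) :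
    f = 0 := by
  -- step 1 : for x ⊥ w₂, (w₁·x)(c₁·x) = 0
  have key2 : ∀ x : Fin n → ℝ, (∑ i, w₂ i * x i) = 0 →
      (∑ i, w₁ i * x i) * (∑ i, c₁ i * x i) = 0 := by
    intro x hx
    have e1 := quad_expand f w₁ c₁ h1 x
    have e2 := quad_expand f w₂ c₂ h2 x
    rw [e2, hx] at e1
    have : 2 * ((∑ i, w₁ i * x i) * (∑ i, c₁ i * x i)) = 0 := by linarith [e1]
    linarith
  have key3 : (∑ i, w₁ i * x₃ i) * (∑ i, c₁ i * x₃ i) = 0 := by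
    have e1 := quad_expand f w₁ c₁ h1 x₃
    have e3 := quad_expand f w₃ c₃ h3 x₃
    rw [e3, hx₃] at e1
    have : 2 * ((∑ i, w₁ i * x₃ i) * (∑ i, c₁ i * x₃ i)) = 0 := by linarith [e1]
    linarith
  have pc13 : ∑ i, c₁ i * x₃ i = 0 := by
    rcases mul_eq_zero.1 key3 with h | h
    · exact absurd h h13
    · exact h
  -- step 2: epsilon trick : ∀ x ⊥ w₂, c₁·x = 0
  have perp : ∀ x : Fin n → ℝ, (∑ i, w₂ i * x i) = 0 → (∑ i, c₁ i * x i) = 0 := by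
    intro x hx
    set A := ∑ i, w₁ i * x i with hA
    set B := ∑ i, w₁ i * x₂ i with hB
    set C := ∑ i, c₁ i * x i with hC
    set D := ∑ i, c₁ i * x₂ i with hD
    have hall : ∀ ε : ℝ, (A + ε * B) * (C + ε * D) = 0 := by
      intro ε
      have hx' : (∑ i, w₂ i * (x i + ε * x₂ i)) = 0 := by
        simp only [mul_add, Finset.sum_add_distrib]
        rw [hx]
        simp only [show ∀ i, w₂ i * (ε * x₂ i) = ε * (w₂ i * x₂ i) from fun i => by ring]
        rw [← Finset.mul_sum, hx₂]; ring
      have := key2 (fun i => x i + ε * x₂ i) hx'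
      have ew : (∑ i, w₁ i * (x i + ε * x₂ i)) = A + ε * B := by
        simp only [mul_add, Finset.sum_add_distrib, hA, hB]
        congr 1
        simp only [show ∀ i, w₁ i * (ε * x₂ i) = ε * (w₁ i * x₂ i) from fun i => by ring]
        rw [← Finset.mul_sum]
      have ec : (∑ i, c₁ i * (x i + ε * x₂ i)) = C + ε * D := by
        simp only [mul_add, Finset.sum_add_distrib, hC, hD]
        congr 1
        simp only [show ∀ i, c₁ i * (ε * x₂ i) = ε * (c₁ i * x₂ i) from fun i => by ring]
        rw [← Finset.mul_sum]
      rwa [ew, ec] at this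
    by_contra hCne
    have hA0 : A = 0 := by
      have := hall 0; simp at this
      rcases this with h | h
      · exact h
      · exact absurd h hCne
    have h1' := hall 1
    have h2' := hall (-1)
    rw [hA0] at h1' h2'
    have hBne : B ≠ 0 := h12
    have e1 : C + D = 0 := by
      rcases mul_eq_zero.1 h1' with h | h
      · simp at h; exact absurd h hBne
      · linarith [h]
    have e2 : C - D = 0 := by
      rcases mul_eq_zero.1 h2' with h | h
      · simp at h; exact absurd h hBne
      · linarith [h]
    apply hCne; linarith
  -- step 3 : c₁ = γ w₂
  set γ : ℝ := (∑ i, c₁ i * w₂ i) / (∑ i, w₂ i * w₂ i) with hγ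
  have hc₁ : ∀ i, c₁ i = γ * w₂ i := by
    set z : Fin n → ℝ := fun i => c₁ i - γ * w₂ i with hz
    have hwz : (∑ i, w₂ i * z i) = 0 := by
      simp only [hz, mul_sub, Finset.sum_sub_distrib]
      rw [show (∑ i, w₂ i * (γ * w₂ i)) = γ * ∑ i, w₂ i * w₂ i from by
        rw [Finset.mul_sum]; exact Finset.sum_congr rfl fun i _ => by ring]
      rw [hγ, div_mul_cancel₀ _ hw₂]
      rw [show (∑ i, w₂ i * c₁ i) = ∑ i, c₁ i * w₂ i from
        Finset.sum_congr rfl fun i _ => by ring]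
      ring
    have hcz : (∑ i, c₁ i * z i) = 0 := perp z hwz
    have hzz : (∑ i, z i * z i) = 0 := by
      have : (∑ i, z i * z i) = (∑ i, c₁ i * z i) - γ * (∑ i, w₂ i * z i) := by
        rw [Finset.mul_sum, ← Finset.sum_sub_distrib]
        exact Finset.sum_congr rfl fun i _ => by simp only [hz]; ring
      rw [this, hcz, hwz]; ring
    intro i
    have hz0 : z i = 0 := by
      have hnn : ∀ j ∈ Finset.univ, (0:ℝ) ≤ z j * z j := fun j _ => mul_self_nonneg _
      have := (Finset.sum_eq_zero_iff_of_nonneg hnn).1 hzz i (Finset.mem_univ i)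
      exact mul_self_eq_zero.1 this
    have : c₁ i - γ * w₂ i = 0 := hz0
    linarith
  -- step 4 : γ = 0
  have hγ0 : γ = 0 := by
    have : (∑ i, c₁ i * x₃ i) = γ * ∑ i, w₂ i * x₃ i := by
      rw [Finset.mul_sum]
      exact Finset.sum_congr rfl fun i _ => by rw [hc₁ i]; ring
    rw [pc13] at this
    rcases mul_eq_zero.1 this.symm with h | h
    · exact h
    · exact absurd h h23
  have hc0 : ∀ i, c₁ i = 0 := fun i => by rw [hc₁ i, hγ0]; ring
  ext i j
  rw [h1 i j, hc0 i, hc0 j]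
  simp
lemma decomp {n : ℕ} (f : Matrix (Fin n) (Fin n) ℝ) (hs : f.IsSymm) (w v : Fin n → ℝ)
    (h : (1 - Matrix.vecMulVec w v) * f * ((1 - Matrix.vecMulVec w v) :
        Matrix (Fin n) (Fin n) ℝ)ᵀ = 0) :
    ∃ c : Fin n → ℝ, ∀ i j, f i j = w i * c j + c i * w j := by
  set B : Fin n → ℝ := fun j => ∑ k, v k * f k j with hB
  set q : ℝ := ∑ k, ∑ l, v k * f k l * v l with hq
  refine ⟨fun j => B j - (q / 2) * w j, fun i j => ?_⟩
  have hsym : ∀ a b, f a b = f b a := fun a b => by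
    simpa using congrFun (congrFun hs b) a
  have hexp : ((1 - Matrix.vecMulVec w v) * f * ((1 - Matrix.vecMulVec w v) :
        Matrix (Fin n) (Fin n) ℝ)ᵀ) i j
      = f i j - w i * B j - B i * w j + q * (w i * w j) := by
    have e1 : ((1 - Matrix.vecMulVec w v) * f) = f - Matrix.vecMulVec w B := by
      ext a b
      simp only [Matrix.sub_mul, Matrix.one_mul, Matrix.sub_apply, Matrix.mul_apply,
        Matrix.vecMulVec_apply, hB]
      rw [show (∑ x, ((1 : Matrix (Fin n) (Fin n) ℝ) a x - w a * v x) * f x b)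
          = (∑ x, (1 : Matrix (Fin n) (Fin n) ℝ) a x * f x b) - ∑ x, w a * (v x * f x b) from by
        rw [← Finset.sum_sub_distrib]; exact Finset.sum_congr rfl fun k _ => by ring]
      congr 1
      · simp [Matrix.one_apply, ite_mul]
      · rw [Finset.mul_sum]
    rw [e1]
    simp only [Matrix.transpose_sub, Matrix.transpose_one, Matrix.sub_mul, Matrix.mul_sub,
      Matrix.mul_one, Matrix.sub_apply, Matrix.mul_apply, Matrix.transpose_apply,
      Matrix.vecMulVec_apply]
    have t0 : ∀ (g : Fin n → ℝ), ∑ x, g x * (1 : Matrix (Fin n) (Fin n) ℝ) x j = g j := by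
      intro g
      simp [Matrix.one_apply, mul_ite]
    have t1 : ∑ k, f i k * (w j * v k) = B i * w j := by
      rw [hB]
      simp only
      rw [Finset.sum_mul]
      exact Finset.sum_congr rfl fun k _ => by rw [hsym i k]; ring
    have t2 : ∑ k, w i * B k * (w j * v k) = q * (w i * w j) := by
      simp only [hB, hq]
      have e : ∀ k : Fin n, w i * (∑ l, v l * f l k) * (w j * v k)
          = (∑ l, v l * f l k * v k) * (w i * w j) := fun k => by
        rw [show (∑ l, v l * f l k * v k) = (∑ l, v l * f l k) * v k from
          (Finset.sum_mul _ _ _).symm]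
        ring
      rw [Finset.sum_congr rfl (fun k _ => e k), ← Finset.sum_mul]
      congr 1
      exact Finset.sum_comm
    simp only [sub_mul, mul_sub, Finset.sum_sub_distrib]
    rw [t0 (fun x => f i x), t0 (fun x => w i * B x), t1, t2]
    ring
  have h0 : ((1 - Matrix.vecMulVec w v) * f * ((1 - Matrix.vecMulVec w v) :
        Matrix (Fin n) (Fin n) ℝ)ᵀ) i j = 0 := by rw [h]; rfl
  rw [hexp] at h0
  have : f i j = w i * B j + B i * w j - q * (w i * w j) := by linarith
  rw [this]; ring

lemma exists_unit_perp {m : ℕ} (hm : 2 ≤ m) (a : EuclideanSpace ℝ (Fin m)) :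
    ∃ u : EuclideanSpace ℝ (Fin m), ‖u‖ = 1 ∧ ⟪u, a⟫ = 0 := by
  have hdim : Module.finrank ℝ (EuclideanSpace ℝ (Fin m)) = m := by
    simp [finrank_euclideanSpace]
  have hspan : Module.finrank ℝ (ℝ ∙ a) ≤ 1 := by
    by_cases h : a = 0
    · rw [h, Submodule.span_zero_singleton, finrank_bot]; omega
    · rw [finrank_span_singleton h]
  have horth : (ℝ ∙ a)ᗮ ≠ ⊥ := by
    intro hbot
    have := Submodule.finrank_add_finrank_orthogonal (𝕜 := ℝ) (ℝ ∙ a)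
    rw [hbot] at this
    simp [hdim] at this
    omega
  obtain ⟨u₀, hu₀mem, hu₀ne⟩ := Submodule.exists_mem_ne_zero_of_ne_bot horth
  refine ⟨‖u₀‖⁻¹ • u₀, ?_, ?_⟩
  · rw [norm_smul]
    simp [norm_ne_zero_iff.2 hu₀ne]
  · have : ⟪a, u₀⟫ = 0 := hu₀mem a (Submodule.mem_span_singleton_self a)
    have h0 : ⟪u₀, a⟫ = 0 := by rwa [real_inner_comm]
    rw [real_inner_smul_left, h0, mul_zero]
lemma toSphere_open_pos {m : ℕ} (hm : 1 ≤ m)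
    {U : Set (sphere (0 : EuclideanSpace ℝ (Fin m)) 1)} (hU : IsOpen U) (hne : U.Nonempty) :
    0 < (volume : Measure (EuclideanSpace ℝ (Fin m))).toSphere U := by
  rw [Measure.toSphere_apply' _ hU.measurableSet]
  obtain ⟨V, hV, hUV⟩ := isOpen_induced_iff.1 hU
  obtain ⟨y₀, hy₀⟩ := hne
  set s : Set (EuclideanSpace ℝ (Fin m)) := {x | x ≠ 0 ∧ ‖x‖ < 1} with hs
  have hsopen : IsOpen s :=
    (isOpen_compl_singleton).inter (isOpen_lt continuous_norm continuous_const)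
  have hcont : ContinuousOn (fun x : EuclideanSpace ℝ (Fin m) => ‖x‖⁻¹ • x) s := by
    intro x hx
    exact ((continuousAt_id.norm.inv₀
      (norm_ne_zero_iff.2 hx.1)).smul continuousAt_id).continuousWithinAt
  set W : Set (EuclideanSpace ℝ (Fin m)) :=
    s ∩ (fun x : EuclideanSpace ℝ (Fin m) => ‖x‖⁻¹ • x) ⁻¹' V with hW
  have hWopen : IsOpen W := hcont.isOpen_inter_preimage hsopen hV
  have hWne : W.Nonempty := by
    refine ⟨(2:ℝ)⁻¹ • (y₀ : EuclideanSpace ℝ (Fin m)), ⟨?_, ?_⟩, ?_⟩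
    · intro h0
      have : ‖(2:ℝ)⁻¹ • (y₀ : EuclideanSpace ℝ (Fin m))‖ = 0 := by rw [h0, norm_zero]
      rw [norm_smul, mem_sphere_zero_iff_norm.1 y₀.2] at this
      norm_num at this
    · rw [norm_smul, mem_sphere_zero_iff_norm.1 y₀.2]
      norm_num
    · show ‖(2:ℝ)⁻¹ • (y₀ : EuclideanSpace ℝ (Fin m))‖⁻¹
          • ((2:ℝ)⁻¹ • (y₀ : EuclideanSpace ℝ (Fin m))) ∈ V
      rw [norm_smul, mem_sphere_zero_iff_norm.1 y₀.2]
      have hmem : (y₀ : EuclideanSpace ℝ (Fin m)) ∈ V := by rw [← hUV] at hy₀; exact hy₀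
      norm_num
      rw [smul_smul]
      norm_num
      exact hmem
  have hsub : W ⊆ Ioo (0:ℝ) 1 • ((↑) '' U : Set (EuclideanSpace ℝ (Fin m))) := by
    rintro x ⟨⟨hx0, hx1⟩, hxV⟩
    have hnorm : ‖x‖ ≠ 0 := norm_ne_zero_iff.2 hx0
    have hz : ‖(‖x‖⁻¹ • x)‖ = 1 := by
      rw [norm_smul, norm_inv, norm_norm, inv_mul_cancel₀ hnorm]
    refine ⟨‖x‖, ⟨norm_pos_iff.2 hx0, hx1⟩, ‖x‖⁻¹ • x, ?_, ?_⟩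
    · refine ⟨⟨‖x‖⁻¹ • x, mem_sphere_zero_iff_norm.2 hz⟩, ?_, rfl⟩
      rw [← hUV]
      exact hxV
    · show ‖x‖ • (‖x‖⁻¹ • x) = x
      rw [smul_smul, mul_inv_cancel₀ hnorm, one_smul]
  have hWpos : 0 < volume W := hWopen.measure_pos volume hWne
  have hpos : 0 < volume (Ioo (0:ℝ) 1 • ((↑) '' U : Set (EuclideanSpace ℝ (Fin m)))) :=
    lt_of_lt_of_le hWpos (measure_mono hsub)
  have hd : (Module.finrank ℝ (EuclideanSpace ℝ (Fin m)) : ℝ≥0∞) ≠ 0 := by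
    simp [finrank_euclideanSpace]
    omega
  exact ENNReal.mul_pos hd hpos.ne'
section cont
variable {m : ℕ} (ξ : ℝ) (η : EuclideanSpace ℝ (Fin m)) (χ : ℝ → ℝ)
  (f : Matrix (Fin (m+1)) (Fin (m+1)) ℝ)

noncomputable def GG : EuclideanSpace ℝ (Fin m) → ℝ := fun y =>
  χ (-⟪y, η⟫ / ξ) *
    ∑ i, ∑ j, (((1 - Matrix.vecMulVec (Fin.cons (-⟪y, η⟫ / ξ) (fun i => y i))
        (Fin.cons 0 (fun i => y i))) * f *
      ((1 - Matrix.vecMulVec (Fin.cons (-⟪y, η⟫ / ξ) (fun i => y i))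
        (Fin.cons 0 (fun i => y i))) : Matrix (Fin (m+1)) (Fin (m+1)) ℝ)ᵀ) i j) ^ 2

lemma GG_cont (hχ : Continuous χ) (hξ : ξ ≠ 0) : Continuous (GG ξ η χ f) := by
  have hip : Continuous fun y : EuclideanSpace ℝ (Fin m) => -⟪y, η⟫ / ξ := by
    have : Continuous fun y : EuclideanSpace ℝ (Fin m) => ⟪y, η⟫ :=
      Continuous.inner continuous_id continuous_const
    exact (this.neg).div_const ξ
  have hcoord : ∀ j : Fin m, Continuous fun y : EuclideanSpace ℝ (Fin m) => y j :=
    fun j => (EuclideanSpace.proj j).continuous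
  have hw : ∀ i : Fin (m+1), Continuous fun y : EuclideanSpace ℝ (Fin m) =>
      (Fin.cons (-⟪y, η⟫ / ξ) (fun i => y i) : Fin (m+1) → ℝ) i := by
    intro i
    refine Fin.cases ?_ ?_ i
    · simpa using hip
    · intro j; simpa using hcoord j
  have hv : ∀ i : Fin (m+1), Continuous fun y : EuclideanSpace ℝ (Fin m) =>
      (Fin.cons (0:ℝ) (fun i => y i) : Fin (m+1) → ℝ) i := by
    intro i
    refine Fin.cases ?_ ?_ i
    · simpa using continuous_const
    · intro j; simpa using hcoord j
  have hP : Continuous fun y : EuclideanSpace ℝ (Fin m) =>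
      ((1 - Matrix.vecMulVec (Fin.cons (-⟪y, η⟫ / ξ) (fun i => y i))
        (Fin.cons 0 (fun i => y i))) : Matrix (Fin (m+1)) (Fin (m+1)) ℝ) := by
    refine continuous_matrix fun i j => ?_
    simp only [Matrix.sub_apply, Matrix.vecMulVec_apply]
    exact continuous_const.sub ((hw i).mul (hv j))
  have hM : Continuous fun y : EuclideanSpace ℝ (Fin m) =>
      ((1 - Matrix.vecMulVec (Fin.cons (-⟪y, η⟫ / ξ) (fun i => y i))
        (Fin.cons 0 (fun i => y i))) * f *
      ((1 - Matrix.vecMulVec (Fin.cons (-⟪y, η⟫ / ξ) (fun i => y i))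
        (Fin.cons 0 (fun i => y i))) : Matrix (Fin (m+1)) (Fin (m+1)) ℝ)ᵀ) :=
    (hP.matrix_mul continuous_const).matrix_mul hP.matrix_transpose
  refine (hχ.comp hip).mul ?_
  refine continuous_finset_sum _ fun i _ => continuous_finset_sum _ fun j _ => ?_
  exact ((continuous_apply j).comp ((continuous_apply i).comp hM)).pow 2
end cont
section setup
variable {m : ℕ}

lemma inner_sum_eq (x y : EuclideanSpace ℝ (Fin m)) : ⟪x, y⟫ = ∑ i, x i * y i := by
  simp [PiLp.inner_apply, RCLike.inner_apply, conj_trivial]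
  exact Finset.sum_congr rfl fun i _ => mul_comm _ _

variable (u e : EuclideanSpace ℝ (Fin m))

noncomputable def Yt (t : ℝ) : EuclideanSpace ℝ (Fin m) := Real.cos t • u + Real.sin t • e
noncomputable def Zt (t : ℝ) : EuclideanSpace ℝ (Fin m) := (-Real.sin t) • u + Real.cos t • e

lemma Yt_inner_Zt (hu : ‖u‖ = 1) (he : ‖e‖ = 1) (hue : ⟪e, u⟫ = 0) (t t' : ℝ) :
    ⟪Yt u e t, Zt u e t'⟫ = Real.sin (t - t') := by
  have huu : ⟪u, u⟫ = (1:ℝ) := by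
    rw [real_inner_self_eq_norm_mul_norm, hu]; norm_num
  have hee : ⟪e, e⟫ = (1:ℝ) := by
    rw [real_inner_self_eq_norm_mul_norm, he]; norm_num
  have hue' : ⟪u, e⟫ = (0:ℝ) := by rw [real_inner_comm]; exact hue
  simp only [Yt, Zt, inner_add_left, inner_add_right, real_inner_smul_left,
    real_inner_smul_right, huu, hee, hue, hue']
  rw [Real.sin_sub]; ring

lemma Yt_inner_Yt (hu : ‖u‖ = 1) (he : ‖e‖ = 1) (hue : ⟪e, u⟫ = 0) (t : ℝ) :
    ⟪Yt u e t, Yt u e t⟫ = 1 := by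
  have huu : ⟪u, u⟫ = (1:ℝ) := by
    rw [real_inner_self_eq_norm_mul_norm, hu]; norm_num
  have hee : ⟪e, e⟫ = (1:ℝ) := by
    rw [real_inner_self_eq_norm_mul_norm, he]; norm_num
  have hue' : ⟪u, e⟫ = (0:ℝ) := by rw [real_inner_comm]; exact hue
  simp only [Yt, inner_add_left, inner_add_right, real_inner_smul_left,
    real_inner_smul_right, huu, hee, hue, hue']
  nlinarith [Real.sin_sq_add_cos_sq t]

lemma Yt_norm (hu : ‖u‖ = 1) (he : ‖e‖ = 1) (hue : ⟪e, u⟫ = 0) (t : ℝ) :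
    ‖Yt u e t‖ = 1 := by
  have h := Yt_inner_Yt u e hu he hue t
  rw [real_inner_self_eq_norm_mul_norm] at h
  nlinarith [norm_nonneg (Yt u e t)]

lemma Yt_inner_eta (η : EuclideanSpace ℝ (Fin m)) (huη : ⟪u, η⟫ = 0) (t : ℝ) :
    ⟪Yt u e t, η⟫ = Real.sin t * ⟪e, η⟫ := by
  simp only [Yt, inner_add_left, real_inner_smul_left, huη]
  ring

end setup

section dots
variable {m : ℕ} (ξ : ℝ) (η u e : EuclideanSpace ℝ (Fin m))

noncomputable def wt (t : ℝ) : Fin (m+1) → ℝ :=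
  Fin.cons (-⟪Yt u e t, η⟫ / ξ) (fun i => Yt u e t i)

noncomputable def xt (t : ℝ) : Fin (m+1) → ℝ := Fin.cons 0 (fun i => Zt u e t i)

lemma wt_dot_xt (hu : ‖u‖ = 1) (he : ‖e‖ = 1) (hue : ⟪e, u⟫ = 0) (t t' : ℝ) :
    ∑ i, wt ξ η u e t i * xt u e t' i = Real.sin (t - t') := by
  rw [Fin.sum_univ_succ]
  simp only [wt, xt, Fin.cons_zero, Fin.cons_succ, mul_zero, zero_add]
  rw [← inner_sum_eq]
  exact Yt_inner_Zt u e hu he hue t t'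

lemma wt_dot_wt (hu : ‖u‖ = 1) (he : ‖e‖ = 1) (hue : ⟪e, u⟫ = 0) (t : ℝ) :
    ∑ i, wt ξ η u e t i * wt ξ η u e t i = (-⟪Yt u e t, η⟫ / ξ)^2 + 1 := by
  rw [Fin.sum_univ_succ]
  simp only [wt, Fin.cons_zero, Fin.cons_succ]
  rw [← inner_sum_eq, Yt_inner_Yt u e hu he hue t]
  ring
end dots

/-- **Ellipticity at fiber infinity for the transverse ray transform of 2-tensors.**
With `n = m + 1 ≥ 3`, for `ξ ≠ 0`, `η ∈ ℝ^m`, and a continuous, even, nonnegative,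
compactly supported cutoff `χ` with `χ(0) > 0`, the quadratic form
`f ↦ ∫_{S^{m−1}} χ(s(Y)) ‖P(Y) f P(Y)ᵀ‖²_F dσ(Y)` is strictly positive on nonzero real
symmetric `n × n` matrices, where `s(Y) = −⟨Y, η⟩/ξ`, `P(Y) = Id − w(Y) v(Y)ᵀ`,
`w(Y) = (s(Y), Y)`, `v(Y) = (0, Y)`, and `σ` is the surface measure on the unit sphere. -/
theorem transverse_fiber_infinity_elliptic
    (m : ℕ) (hm : 2 ≤ m) (ξ : ℝ) (hξ : ξ ≠ 0) (η : EuclideanSpace ℝ (Fin m))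
    (χ : ℝ → ℝ) (hχcont : Continuous χ) (hχeven : ∀ s, χ (-s) = χ s)
    (hχnonneg : ∀ s, 0 ≤ χ s) (hχsupp : HasCompactSupport χ) (hχ0 : 0 < χ 0)
    (f : Matrix (Fin (m + 1)) (Fin (m + 1)) ℝ) (hsymm : f.IsSymm) (hf : f ≠ 0) :
    0 < ∫ Y : Metric.sphere (0 : EuclideanSpace ℝ (Fin m)) 1,
        (let s : ℝ := -⟪(Y : EuclideanSpace ℝ (Fin m)), η⟫ / ξ
         let w : Fin (m + 1) → ℝ := Fin.cons s (fun i => (Y : EuclideanSpace ℝ (Fin m)) i)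
         let v : Fin (m + 1) → ℝ := Fin.cons 0 (fun i => (Y : EuclideanSpace ℝ (Fin m)) i)
         let P : Matrix (Fin (m + 1)) (Fin (m + 1)) ℝ := 1 - Matrix.vecMulVec w v
         χ s * ∑ i, ∑ j, ((P * f * Pᵀ) i j) ^ 2)
      ∂((volume : Measure (EuclideanSpace ℝ (Fin m))).toSphere) := by
  classical
  show 0 < ∫ Y : Metric.sphere (0 : EuclideanSpace ℝ (Fin m)) 1,
      GG ξ η χ f (Y : EuclideanSpace ℝ (Fin m))
    ∂((volume : Measure (EuclideanSpace ℝ (Fin m))).toSphere)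
  set g : Metric.sphere (0 : EuclideanSpace ℝ (Fin m)) 1 → ℝ :=
    fun Y => GG ξ η χ f (Y : EuclideanSpace ℝ (Fin m)) with hgdef
  have hgc : Continuous g := (GG_cont ξ η χ f hχcont hξ).comp continuous_subtype_val
  have hgnn : ∀ Y, 0 ≤ g Y := by
    intro Y
    refine mul_nonneg (hχnonneg _) ?_
    exact Finset.sum_nonneg fun i _ => Finset.sum_nonneg fun j _ => sq_nonneg _
  -- positivity of χ near 0
  have hev : ∀ᶠ t in nhds (0:ℝ), 0 < χ t :=
    (hχcont.continuousAt (x := (0:ℝ))).eventually (eventually_gt_nhds hχ0)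
  obtain ⟨ε, hε, hball⟩ := Metric.eventually_nhds_iff.1 hev
  -- orthonormal pair
  obtain ⟨u, hu, huη⟩ := exists_unit_perp hm η
  obtain ⟨e, he, heu⟩ := exists_unit_perp hm u
  -- delta
  set C : ℝ := |⟪e, η⟫| / |ξ| with hCdef
  have hC : 0 ≤ C := div_nonneg (abs_nonneg _) (abs_nonneg _)
  set δ : ℝ := min 1 (ε / (4 * (C + 1))) with hδdef
  have hδpos : 0 < δ := lt_min one_pos (div_pos hε (by linarith))
  have hδ1 : δ ≤ 1 := min_le_left _ _
  have hδε : 2 * δ * (C + 1) ≤ ε / 2 := by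
    have h2 : δ ≤ ε / (4 * (C + 1)) := min_le_right _ _
    have h3 : (0:ℝ) < 4 * (C + 1) := by linarith
    rw [le_div_iff₀ h3] at h2
    nlinarith
  have hsmall : ∀ t : ℝ, |t| ≤ 2 * δ → 0 < χ (-⟪Yt u e t, η⟫ / ξ) := by
    intro t ht
    apply hball
    rw [Real.dist_0_eq_abs, Yt_inner_eta u e η huη t]
    have habs : |(-(Real.sin t * ⟪e, η⟫) / ξ)| = |Real.sin t| * C := by
      rw [abs_div, abs_neg, abs_mul, hCdef, mul_div_assoc]
    rw [habs]
    have hst : |Real.sin t| ≤ 2 * δ := le_trans (Real.abs_sin_le_abs) ht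
    have : |Real.sin t| * C ≤ 2 * δ * (C + 1) := by
      nlinarith [abs_nonneg (Real.sin t)]
    linarith
  have hmem : ∀ t : ℝ, Yt u e t ∈ Metric.sphere (0 : EuclideanSpace ℝ (Fin m)) 1 :=
    fun t => mem_sphere_zero_iff_norm.2 (Yt_norm u e hu he heu t)
  -- existence of a point with positive integrand
  have hex : ∃ Y₀, 0 < g Y₀ := by
    by_contra hcon
    push_neg at hcon
    have hzero : ∀ Y, g Y = 0 := fun Y => le_antisymm (hcon Y) (hgnn Y)
    have hPfP : ∀ t : ℝ, |t| ≤ 2 * δ →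
        (1 - Matrix.vecMulVec (wt ξ η u e t) (Fin.cons 0 (fun i => Yt u e t i))) * f *
          ((1 - Matrix.vecMulVec (wt ξ η u e t) (Fin.cons 0 (fun i => Yt u e t i))) :
            Matrix (Fin (m+1)) (Fin (m+1)) ℝ)ᵀ = 0 := by
      intro t ht
      have h0 : χ (-⟪Yt u e t, η⟫ / ξ) *
          ∑ i, ∑ j, (((1 - Matrix.vecMulVec (wt ξ η u e t)
              (Fin.cons 0 (fun i => Yt u e t i))) * f *
            ((1 - Matrix.vecMulVec (wt ξ η u e t) (Fin.cons 0 (fun i => Yt u e t i))) :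
              Matrix (Fin (m+1)) (Fin (m+1)) ℝ)ᵀ) i j) ^ 2 = 0 :=
        hzero ⟨Yt u e t, hmem t⟩
      have hχpos := hsmall t ht
      have hsum : ∑ i, ∑ j, (((1 - Matrix.vecMulVec (wt ξ η u e t)
              (Fin.cons 0 (fun i => Yt u e t i))) * f *
            ((1 - Matrix.vecMulVec (wt ξ η u e t) (Fin.cons 0 (fun i => Yt u e t i))) :
              Matrix (Fin (m+1)) (Fin (m+1)) ℝ)ᵀ) i j) ^ 2 = 0 := by
        rcases mul_eq_zero.1 h0 with h | h
        · exact absurd h hχpos.ne'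
        · exact h
      ext i j
      have h1 := (Finset.sum_eq_zero_iff_of_nonneg
        (fun i _ => Finset.sum_nonneg fun j _ => sq_nonneg _)).1 hsum i (Finset.mem_univ i)
      have h2 := (Finset.sum_eq_zero_iff_of_nonneg
        (fun j _ => sq_nonneg _)).1 h1 j (Finset.mem_univ j)
      simpa using pow_eq_zero_iff (n := 2) (by norm_num) |>.1 h2
    obtain ⟨c₁, hc₁⟩ := decomp f hsymm (wt ξ η u e 0) (Fin.cons 0 fun i => Yt u e 0 i)
      (hPfP 0 (by simp; positivity))
    obtain ⟨c₂, hc₂⟩ := decomp f hsymm (wt ξ η u e δ) (Fin.cons 0 fun i => Yt u e δ i)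
      (hPfP δ (by rw [abs_of_pos hδpos]; linarith))
    obtain ⟨c₃, hc₃⟩ := decomp f hsymm (wt ξ η u e (2*δ)) (Fin.cons 0 fun i => Yt u e (2*δ) i)
      (hPfP (2*δ) (by rw [abs_of_pos (by linarith)]))
    have hπ : (2:ℝ) < Real.pi := by nlinarith [Real.pi_gt_three]
    have hsδ : Real.sin δ ≠ 0 :=
      (Real.sin_pos_of_pos_of_lt_pi hδpos (by linarith)).ne'
    have hs2δ : Real.sin (2*δ) ≠ 0 :=
      (Real.sin_pos_of_pos_of_lt_pi (by linarith) (by linarith)).ne'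
    have hfz : f = 0 := by
      refine core_s4 f (wt ξ η u e 0) (wt ξ η u e δ) (wt ξ η u e (2*δ)) c₁ c₂ c₃
        (xt u e δ) (xt u e (2*δ)) hc₁ hc₂ hc₃ ?_ ?_ ?_ ?_ ?_ ?_
      · rw [wt_dot_xt ξ η u e hu he heu δ δ]; simp
      · rw [wt_dot_xt ξ η u e hu he heu 0 δ, zero_sub, Real.sin_neg]
        exact neg_ne_zero.2 hsδ
      · rw [wt_dot_xt ξ η u e hu he heu (2*δ) (2*δ)]; simp
      · rw [wt_dot_xt ξ η u e hu he heu 0 (2*δ), zero_sub, Real.sin_neg]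
        exact neg_ne_zero.2 hs2δ
      · rw [wt_dot_xt ξ η u e hu he heu δ (2*δ)]
        rw [show δ - 2*δ = -δ from by ring, Real.sin_neg]
        exact neg_ne_zero.2 hsδ
      · rw [wt_dot_wt ξ η u e hu he heu δ]
        positivity
    exact hf hfz
  obtain ⟨Y₀, hY₀⟩ := hex
  have hcs : HasCompactSupport g :=
    IsCompact.of_isClosed_subset isCompact_univ (isClosed_tsupport g) (Set.subset_univ _)
  have hint : Integrable g ((volume : Measure (EuclideanSpace ℝ (Fin m))).toSphere) :=
    hgc.integrable_of_hasCompactSupport hcs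
  rw [integral_pos_iff_support_of_nonneg hgnn hint]
  have hU : IsOpen {Y : Metric.sphere (0 : EuclideanSpace ℝ (Fin m)) 1 | 0 < g Y} :=
    isOpen_lt continuous_const hgc
  have hpos := toSphere_open_pos (by omega : 1 ≤ m) hU ⟨Y₀, hY₀⟩
  exact lt_of_lt_of_le hpos (measure_mono fun Y hY => ne_of_gt hY)
end
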